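/- Let A be a G-graded, positively Z-filtered algebra with F₀A = K, together with a (G × Z)-graded algebra isomorphism φ_A : S(V) → G(A) from the ε-symmetric algebra of a G-graded vector space V to the associated graded algebra of A. Then F₁A is closed under the ε-commutator [a,b] = ab − ε(|a|,|b|)ba, making F₁A a color Lie algebra, and K = F₀A is a central graded ideal of F₁A, giving a central extension 0 → K → F₁A → L → 0 where L is the induced color Lie algebra structure on S₁(V) ≅ F₁A/F₀A. -/

import Mathlib

open TensorAlgebra

/-- An antisymmetric bicharacter `ε : G × G → K` on an abelian group `G`. -/
structure ColorStructure (G K : Type*) [CommGroup G] [Field K] where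
  ε : G → G → K
  antisym : ∀ g h, ε g h * ε h g = 1
  mul_right : ∀ g h k, ε g (h * k) = ε g h * ε g k
  mul_left : ∀ g h k, ε (g * h) k = ε g k * ε h k

/-- A `G`-graded `ε`-Lie algebra (color Lie algebra) structure on a `K`-vector space `V`. -/
structure ColorLieAlgebra {G K : Type*} [CommGroup G] [DecidableEq G] [Field K]
    (χ : ColorStructure G K) (V : Type*) [AddCommGroup V] [Module K V] where
  grading : G → Submodule K V
  decomp : DirectSum.IsInternal grading
  bracket : V →ₗ[K] V →ₗ[K] V
  bracket_grade : ∀ g h : G, ∀ a ∈ grading g, ∀ b ∈ grading h,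
    bracket a b ∈ grading (g * h)
  bracket_antisym : ∀ g h : G, ∀ a ∈ grading g, ∀ b ∈ grading h,
    bracket a b = -(χ.ε g h • bracket b a)
  jacobi : ∀ g h k : G, ∀ a ∈ grading g, ∀ b ∈ grading h, ∀ c ∈ grading k,
    χ.ε k g • bracket a (bracket b c) + χ.ε g h • bracket b (bracket c a)
      + χ.ε h k • bracket c (bracket a b) = 0

/-- A scalar graded 2-cocycle of degree zero on a color Lie algebra,
with values in `K` regarded as a trivial graded `L`-module. -/
structure ColorCocycle {G K : Type*} [CommGroup G] [DecidableEq G] [Field K]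
    {χ : ColorStructure G K} {V : Type*} [AddCommGroup V] [Module K V]
    (L : ColorLieAlgebra χ V) where
  ω : V →ₗ[K] V →ₗ[K] K
  antisym : ∀ g h : G, ∀ a ∈ L.grading g, ∀ b ∈ L.grading h,
    ω a b = -(χ.ε g h * ω b a)
  cocycle : ∀ g h k : G, ∀ a ∈ L.grading g, ∀ b ∈ L.grading h, ∀ c ∈ L.grading k,
    χ.ε k g * ω a (L.bracket b c) + χ.ε g h * ω b (L.bracket c a)
      + χ.ε h k * ω c (L.bracket a b) = 0
  degree_zero : ∀ g h : G, g * h ≠ 1 → ∀ a ∈ L.grading g, ∀ b ∈ L.grading h, ω a b = 0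

variable {G K V : Type*} [CommGroup G] [DecidableEq G] [Field K] [AddCommGroup V] [Module K V]
  {χ : ColorStructure G K}

/-- The defining relations of the generalized enveloping algebra `U_ω(L)`. -/
inductive URel (L : ColorLieAlgebra χ V) (c : ColorCocycle L) :
    TensorAlgebra K V → TensorAlgebra K V → Prop
  | rel {g h : G} {a b : V} (ha : a ∈ L.grading g) (hb : b ∈ L.grading h) :
      URel L c (ι K a * ι K b)
        (χ.ε g h • (ι K b * ι K a) + ι K (L.bracket a b)
          + algebraMap K (TensorAlgebra K V) (c.ω a b))

/-- The generalized enveloping algebra `U_ω(L)`: the quotient of the tensor algebra `T(L)`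
by the two-sided ideal generated by the elements
`v₁ ⊗ v₂ - ε(|v₁|,|v₂|) v₂ ⊗ v₁ - [v₁,v₂] - ω(v₁,v₂)` for homogeneous `v₁, v₂`. -/
def Uenv (L : ColorLieAlgebra χ V) (c : ColorCocycle L) : Type _ :=
  RingQuot (URel L c)

noncomputable instance (L : ColorLieAlgebra χ V) (c : ColorCocycle L) : Ring (Uenv L c) :=
  inferInstanceAs (Ring (RingQuot (URel L c)))

noncomputable instance (L : ColorLieAlgebra χ V) (c : ColorCocycle L) :
    Algebra K (Uenv L c) :=
  inferInstanceAs (Algebra K (RingQuot (URel L c)))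

/-- The canonical map `i_ω : L → U_ω(L)`. -/
noncomputable def Uι (L : ColorLieAlgebra χ V) (c : ColorCocycle L) : V →ₗ[K] Uenv L c :=
  (RingQuot.mkAlgHom K (URel L c)).toLinearMap ∘ₗ ι K

/-- The canonical positive filtration on `U_ω(L)`: `Ufil L c n` is the span of products of
at most `n` images of elements of `L` (the image of `T_n(L)`). -/
noncomputable def Ufil (L : ColorLieAlgebra χ V) (c : ColorCocycle L) (n : ℕ) :
    Submodule K (Uenv L c) :=
  Submodule.span K {u | ∃ l : List V, l.length ≤ n ∧ u = (l.map (Uι L c)).prod}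

/-- `Ulow L c n` is `Ufil L c (n-1)`, with the convention `Ufil L c (-1) = ⊥`. -/
noncomputable def Ulow (L : ColorLieAlgebra χ V) (c : ColorCocycle L) :
    ℕ → Submodule K (Uenv L c)
  | 0 => ⊥
  | n + 1 => Ufil L c n

/-- The `G`-grading of `U_ω(L)`: the `g`-component is spanned by products of images of
homogeneous elements whose degrees multiply to `g`. -/
noncomputable def Ugrading (L : ColorLieAlgebra χ V) (c : ColorCocycle L) (g : G) :
    Submodule K (Uenv L c) :=
  Submodule.span K {u | ∃ l : List (G × V), (∀ p ∈ l, p.2 ∈ L.grading p.1) ∧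
    (l.map Prod.fst).prod = g ∧ u = (l.map fun p => Uι L c p.2).prod}

/-- `lowerFil F n = F (n-1)`, with the convention `F (-1) = ⊥`. -/
def lowerFil {A : Type*} [Ring A] [Algebra K A]
    (F : ℕ → Submodule K A) : ℕ → Submodule K A
  | 0 => ⊥
  | n + 1 => F n

section AuxF1

open scoped DirectSum

variable {A : Type*} [Ring A] [Algebra K A]

lemma ColorStructure.eps_ne_zero (χ : ColorStructure G K) (g h : G) : χ.ε g h ≠ 0 := by
  intro h0
  have := χ.antisym g h
  rw [h0, zero_mul] at this
  exact zero_ne_one this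

lemma ColorStructure.eps_one_left (χ : ColorStructure G K) (h : G) : χ.ε 1 h = 1 := by
  have h1 : χ.ε (1 * 1 : G) h = χ.ε 1 h * χ.ε 1 h := χ.mul_left 1 1 h
  rw [one_mul] at h1
  have h2 : χ.ε 1 h * χ.ε 1 h = χ.ε 1 h * 1 := by rw [mul_one, ← h1]
  exact mul_left_cancel₀ (χ.eps_ne_zero 1 h) h2

/-- In an internally graded ring, `1` lies in the identity component. -/
lemma one_mem_grading_of_internal (AG : G → Submodule K A)
    (hAdec : DirectSum.IsInternal AG)
    (hgrmul : ∀ g h : G, ∀ a ∈ AG g, ∀ b ∈ AG h, a * b ∈ AG (g * h)) :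
    (1 : A) ∈ AG 1 := by
  classical
  set e := LinearEquiv.ofBijective (DirectSum.coeLinearMap AG) hAdec with he
  set u := e.symm 1 with hudef
  have hu1 : DirectSum.coeLinearMap AG u = 1 := e.apply_symm_apply 1
  set c : A := ↑(u 1) with hc
  have key : ∀ x : A, x * c = x := by
    intro x
    have hker : ∀ h' : G, AG h' ≤ LinearMap.ker
        (LinearMap.mulRight K c - LinearMap.id (R := K) (M := A)) := by
      intro h' a ha
      simp only [LinearMap.mem_ker, LinearMap.sub_apply, LinearMap.mulRight_apply,
        LinearMap.id_apply, sub_eq_zero]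
      -- goal : a * c = a
      have hsum : (1 : A) = ∑ g ∈ u.support, ((u g : A)) := by
        conv_lhs => rw [← hu1, ← DirectSum.sum_support_of u]
        rw [map_sum]
        simp [DirectSum.coeLinearMap_of]
      have hmem : ∀ g : G, a * (u g : A) ∈ AG (h' * g) :=
        fun g => hgrmul h' g a ha _ (u g).2
      set s : ⨁ g, ↥(AG g) :=
        ∑ g ∈ u.support, DirectSum.of (fun g => ↥(AG g)) (h' * g) ⟨a * ↑(u g), hmem g⟩ with hs
      have hse : DirectSum.coeLinearMap AG s = a := by
        rw [hs, map_sum]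
        simp only [DirectSum.coeLinearMap_of]
        rw [← Finset.mul_sum, ← hsum, mul_one]
      have hae : DirectSum.coeLinearMap AG
          (DirectSum.of (fun g => ↥(AG g)) h' ⟨a, ha⟩) = a :=
        DirectSum.coeLinearMap_of AG h' ⟨a, ha⟩
      have hseq : s = DirectSum.of (fun g => ↥(AG g)) h' ⟨a, ha⟩ := by
        apply e.injective
        have e1 : e s = DirectSum.coeLinearMap AG s := by rw [he]; rfl
        have e2 : e (DirectSum.of (fun g => ↥(AG g)) h' ⟨a, ha⟩)
            = DirectSum.coeLinearMap AG (DirectSum.of (fun g => ↥(AG g)) h' ⟨a, ha⟩) := by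
          rw [he]; rfl
        rw [e1, e2, hse, hae]
      have hval := congrArg (fun z : ⨁ g, ↥(AG g) => ((z h' : A))) hseq
      simp only at hval
      rw [DirectSum.coe_of_apply, if_pos rfl] at hval
      rw [hs, DFinsupp.finset_sum_apply] at hval
      rw [AddSubmonoidClass.coe_finset_sum] at hval
      have hterm : ∀ g ∈ u.support,
          ((DirectSum.of (fun g => ↥(AG g)) (h' * g) ⟨a * ↑(u g), hmem g⟩ h' : A))
            = if g = 1 then a * (u g : A) else 0 := by
        intro g _
        rw [DirectSum.coe_of_apply]
        by_cases hg : g = 1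
        · subst hg; rw [if_pos (mul_one h'), if_pos rfl]
        · rw [if_neg (by simpa [mul_eq_left] using hg), if_neg hg]
          exact ZeroMemClass.coe_zero _
      rw [Finset.sum_congr rfl hterm, Finset.sum_ite_eq' u.support (1 : G)
        (fun g => a * (u g : A))] at hval
      by_cases h1 : (1 : G) ∈ u.support
      · rw [if_pos h1] at hval
        exact hval
      · rw [if_neg h1] at hval
        have ha0 : a = 0 := hval.symm
        rw [ha0, zero_mul]
    have htop : (⊤ : Submodule K A) ≤ LinearMap.ker
        (LinearMap.mulRight K c - LinearMap.id (R := K) (M := A)) := by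
      rw [← hAdec.submodule_iSup_eq_top]
      exact iSup_le hker
    have := htop (Submodule.mem_top (x := x))
    simpa [sub_eq_zero] using this
  have h1c : c = 1 := by rw [← one_mul c, key 1]
  rw [← h1c]; exact (u 1).2

variable (χ) in
/-- The `G`-grading on `F 1` induced by `AG`. -/
noncomputable def auxGr (F : ℕ → Submodule K A) (AG : G → Submodule K A) (g : G) :
    Submodule K ↥(F 1) := Submodule.comap (F 1).subtype (AG g)

lemma auxGr_internal (F : ℕ → Submodule K A) (AG : G → Submodule K A)
    (hAdec : DirectSum.IsInternal AG)
    (hgradedfil1 : F 1 = ⨆ g, F 1 ⊓ AG g) :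
    DirectSum.IsInternal (auxGr F AG) := by
  rw [DirectSum.isInternal_submodule_iff_iSupIndep_and_iSup_eq_top]
  constructor
  · intro g
    rw [Submodule.disjoint_def]
    intro x hxg hxs
    have hAG := hAdec.submodule_iSupIndep
    have h1 : (x : A) ∈ AG g := hxg
    have hle : Submodule.map (F 1).subtype (⨆ h, ⨆ _ : h ≠ g, auxGr F AG h)
        ≤ ⨆ h, ⨆ _ : h ≠ g, AG h := by
      rw [Submodule.map_iSup]
      refine iSup_mono fun h => ?_
      rw [Submodule.map_iSup]
      refine iSup_mono fun _ => ?_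
      show Submodule.map (F 1).subtype (Submodule.comap (F 1).subtype (AG h)) ≤ AG h
      rw [Submodule.map_comap_subtype]
      exact inf_le_right
    have h2 : (x : A) ∈ ⨆ h, ⨆ _ : h ≠ g, AG h :=
      hle (Submodule.mem_map_of_mem hxs)
    have hx0 : (x : A) = 0 := Submodule.disjoint_def.mp (hAG g) _ h1 h2
    exact Subtype.ext hx0
  · apply Submodule.map_injective_of_injective (F 1).injective_subtype
    rw [Submodule.map_iSup, Submodule.map_top, Submodule.range_subtype]
    simp_rw [auxGr, Submodule.map_comap_subtype]
    exact hgradedfil1.symm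

variable (χ) in
/-- The `ε`-commutator on homogeneous pieces of `F 1`. -/
noncomputable def auxB (F : ℕ → Submodule K A) (AG : G → Submodule K A)
    (hc : ∀ (g h : G), ∀ a ∈ F 1 ⊓ AG g, ∀ b ∈ F 1 ⊓ AG h,
      a * b - χ.ε g h • (b * a) ∈ F 1) (g h : G) :
    ↥(auxGr F AG g) →ₗ[K] ↥(auxGr F AG h) →ₗ[K] ↥(F 1) :=
  LinearMap.mk₂ K
    (fun x y => ⟨(x.1 : A) * (y.1 : A) - χ.ε g h • ((y.1 : A) * (x.1 : A)),
      hc g h _ ⟨x.1.2, x.2⟩ _ ⟨y.1.2, y.2⟩⟩)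
    (by intro m m' n; apply Subtype.ext; push_cast
        simp only [add_mul, mul_add, smul_add]; abel)
    (by intro t m n; apply Subtype.ext; push_cast
        simp only [smul_mul_assoc, mul_smul_comm, smul_sub, smul_smul, mul_comm])
    (by intro m n n'; apply Subtype.ext; push_cast
        simp only [add_mul, mul_add, smul_add]; abel)
    (by intro t m n; apply Subtype.ext; push_cast
        simp only [smul_mul_assoc, mul_smul_comm, smul_sub, smul_smul, mul_comm])

lemma auxB_coe (F : ℕ → Submodule K A) (AG : G → Submodule K A) (hc) (g h : G)
    (x : ↥(auxGr F AG g)) (y : ↥(auxGr F AG h)) :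
    ((auxB χ F AG hc g h x y : ↥(F 1)) : A)
      = (x.1 : A) * (y.1 : A) - χ.ε g h • ((y.1 : A) * (x.1 : A)) := rfl

lemma auxB_mem (F : ℕ → Submodule K A) (AG : G → Submodule K A) (hc)
    (hgrmul : ∀ g h : G, ∀ a ∈ AG g, ∀ b ∈ AG h, a * b ∈ AG (g * h)) (g h : G)
    (x : ↥(auxGr F AG g)) (y : ↥(auxGr F AG h)) :
    auxB χ F AG hc g h x y ∈ auxGr F AG (g * h) := by
  show ((auxB χ F AG hc g h x y : ↥(F 1)) : A) ∈ AG (g * h)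
  rw [auxB_coe]
  refine sub_mem (hgrmul g h _ x.2 _ y.2) (Submodule.smul_mem _ _ ?_)
  rw [mul_comm g h]
  exact hgrmul h g _ y.2 _ x.2

variable (χ) in
/-- The `ε`-commutator bracket on all of `F 1`, via the decomposition. -/
noncomputable def auxBracket (F : ℕ → Submodule K A) (AG : G → Submodule K A)
    (hc : ∀ (g h : G), ∀ a ∈ F 1 ⊓ AG g, ∀ b ∈ F 1 ⊓ AG h,
      a * b - χ.ε g h • (b * a) ∈ F 1)
    (hdec : DirectSum.IsInternal (auxGr F AG)) :
    ↥(F 1) →ₗ[K] ↥(F 1) →ₗ[K] ↥(F 1) :=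
  (((DirectSum.toModule K G ((⨁ h, ↥(auxGr F AG h)) →ₗ[K] ↥(F 1))
      (fun g => (DirectSum.toModule K G (↥(auxGr F AG g) →ₗ[K] ↥(F 1))
        (fun h => (auxB χ F AG hc g h).flip)).flip)).comp
    (LinearEquiv.ofBijective (DirectSum.coeLinearMap (auxGr F AG)) hdec).symm.toLinearMap).compl₂
    (LinearEquiv.ofBijective (DirectSum.coeLinearMap (auxGr F AG)) hdec).symm.toLinearMap)

lemma auxBracket_apply (F : ℕ → Submodule K A) (AG : G → Submodule K A) (hc)
    (hdec : DirectSum.IsInternal (auxGr F AG)) (g h : G) (a b : ↥(F 1))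
    (ha : a ∈ auxGr F AG g) (hb : b ∈ auxGr F AG h) :
    auxBracket χ F AG hc hdec a b = auxB χ F AG hc g h ⟨a, ha⟩ ⟨b, hb⟩ := by
  have hD : ∀ (k : G) (x : ↥(F 1)) (hx : x ∈ auxGr F AG k),
      (LinearEquiv.ofBijective (DirectSum.coeLinearMap (auxGr F AG)) hdec).symm x
        = DirectSum.lof K G (fun g => ↥(auxGr F AG g)) k ⟨x, hx⟩ := by
    intro k x hx
    rw [LinearEquiv.symm_apply_eq]
    show x = DirectSum.coeLinearMap (auxGr F AG) _
    rw [DirectSum.lof_eq_of,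
      DirectSum.coeLinearMap_of]
  unfold auxBracket
  rw [LinearMap.compl₂_apply, LinearMap.comp_apply, LinearEquiv.coe_coe, hD g a ha,
    hD h b hb, DirectSum.toModule_lof, LinearMap.flip_apply, DirectSum.toModule_lof,
    LinearMap.flip_apply]

end AuxF1

/-- let `A` be a `G`-graded positively `ℤ`-filtered algebra with `F₀A = K`
whose associated graded algebra is (`G×ℤ`-graded isomorphic to) an `ε`-symmetric algebra,
in particular `ε`-commutative. Then `F₁A` is closed under the `ε`-commutator
`[a,b] = ab - ε(|a|,|b|) ba` and becomes a color Lie algebra, in which `K = F₀A` is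
central, giving a central extension `0 → K → F₁A → L → 0`. -/
theorem F1_is_color_lie_central_extension [CharZero K]
    {A : Type*} [Ring A] [Algebra K A]
    (F : ℕ → Submodule K A) (AG : G → Submodule K A)
    (hAdec : DirectSum.IsInternal AG)
    (hmono : Monotone F) (hexh : ⨆ n, F n = ⊤)
    (hF0 : F 0 = Submodule.span K {(1 : A)})
    (hFmul : ∀ m n : ℕ, ∀ a ∈ F m, ∀ b ∈ F n, a * b ∈ F (m + n))
    (hgradedfil : ∀ n, F n = ⨆ g, F n ⊓ AG g)
    (hgrmul : ∀ g h : G, ∀ a ∈ AG g, ∀ b ∈ AG h, a * b ∈ AG (g * h))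
    -- `ε`-commutativity of the associated graded algebra `G(A) ≅ S(V)`
    (hcomm : ∀ (m n : ℕ) (g h : G), ∀ a ∈ F m ⊓ AG g, ∀ b ∈ F n ⊓ AG h,
      a * b - χ.ε g h • (b * a) ∈ lowerFil F (m + n)) :
    -- `F₁A` is closed under the `ε`-commutator of homogeneous elements
    (∀ (g h : G), ∀ a ∈ F 1 ⊓ AG g, ∀ b ∈ F 1 ⊓ AG h,
      a * b - χ.ε g h • (b * a) ∈ F 1) ∧
    -- `F₁A` is a color Lie algebra under the `ε`-commutator, with `F₀A = K` central,
    -- so that `0 → K → F₁A → L → 0` is a central extension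
    (∃ E : ColorLieAlgebra χ ↥(F 1),
      (∀ g : G, E.grading g = Submodule.comap (F 1).subtype (AG g)) ∧
      (∀ (g h : G) (a b : ↥(F 1)), (a : A) ∈ AG g → (b : A) ∈ AG h →
        ((E.bracket a b : ↥(F 1)) : A) = a * b - χ.ε g h • ((b : A) * a)) ∧
      (∀ a b : ↥(F 1), (a : A) ∈ F 0 → E.bracket a b = 0)) := by
  have hc : ∀ (g h : G), ∀ a ∈ F 1 ⊓ AG g, ∀ b ∈ F 1 ⊓ AG h,
      a * b - χ.ε g h • (b * a) ∈ F 1 := fun g h a ha b hb => by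
    simpa [lowerFil] using hcomm 1 1 g h a ha b hb
  have hdec : DirectSum.IsInternal (auxGr (A := A) F AG) :=
    auxGr_internal F AG hAdec (hgradedfil 1)
  have hbr := auxBracket_apply (χ := χ) F AG hc hdec
  refine ⟨hc, ?_⟩
  refine ⟨{ grading := auxGr F AG
            decomp := hdec
            bracket := auxBracket χ F AG hc hdec
            bracket_grade := ?_
            bracket_antisym := ?_
            jacobi := ?_ }, fun g => rfl, ?_, ?_⟩
  · intro g h a ha b hb
    rw [hbr g h a b ha hb]
    exact auxB_mem F AG hc hgrmul g h ⟨a, ha⟩ ⟨b, hb⟩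
  · intro g h a ha b hb
    rw [hbr g h a b ha hb, hbr h g b a hb ha]
    apply Subtype.ext
    push_cast [auxB_coe]
    rw [smul_sub, smul_smul, χ.antisym g h, one_smul, neg_sub]
  · intro g h k a ha b hb c hcm
    rw [hbr h k b c hb hcm, hbr k g c a hcm ha, hbr g h a b ha hb,
      hbr g (h * k) a _ ha (auxB_mem F AG hc hgrmul h k ⟨b, hb⟩ ⟨c, hcm⟩),
      hbr h (k * g) b _ hb (auxB_mem F AG hc hgrmul k g ⟨c, hcm⟩ ⟨a, ha⟩),
      hbr k (g * h) c _ hcm (auxB_mem F AG hc hgrmul g h ⟨a, ha⟩ ⟨b, hb⟩)]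
    apply Subtype.ext
    push_cast [auxB_coe]
    rw [χ.mul_right g h k, χ.mul_right h k g, χ.mul_right k g h]
    have hp : χ.ε h g = (χ.ε g h)⁻¹ := eq_inv_of_mul_eq_one_left (χ.antisym h g)
    have hq : χ.ε k h = (χ.ε h k)⁻¹ := eq_inv_of_mul_eq_one_left (χ.antisym k h)
    have hr : χ.ε g k = (χ.ε k g)⁻¹ := eq_inv_of_mul_eq_one_left (χ.antisym g k)
    have hp0 : χ.ε g h ≠ 0 := χ.eps_ne_zero g h
    have hq0 : χ.ε h k ≠ 0 := χ.eps_ne_zero h k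
    have hr0 : χ.ε k g ≠ 0 := χ.eps_ne_zero k g
    rw [hp, hq, hr]
    simp only [mul_sub, sub_mul, smul_sub, smul_add, mul_smul_comm, smul_mul_assoc,
      smul_smul, mul_assoc]
    match_scalars <;> (field_simp; try ring)
  · intro g h a b ha hb
    rw [hbr g h a b ha hb]
    rfl
  · intro a b ha
    obtain ⟨μ, hμ⟩ := Submodule.mem_span_singleton.mp (hF0 ▸ ha)
    have h1A : (1 : A) ∈ AG 1 := one_mem_grading_of_internal AG hAdec hgrmul
    have haG : a ∈ auxGr F AG 1 := by
      show (a : A) ∈ AG 1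
      rw [← hμ]
      exact Submodule.smul_mem _ _ h1A
    have hker : ∀ h : G, auxGr F AG h ≤ LinearMap.ker (auxBracket χ F AG hc hdec a) := by
      intro h y hy
      rw [LinearMap.mem_ker, hbr 1 h a y haG hy]
      apply Subtype.ext
      rw [auxB_coe]
      rw [χ.eps_one_left, one_smul]
      simp [← hμ, smul_mul_assoc, mul_smul_comm]
    have htop : (⊤ : Submodule K ↥(F 1)) ≤ LinearMap.ker (auxBracket χ F AG hc hdec a) :=
      hdec.submodule_iSup_eq_top ▸ iSup_le hker
    exact LinearMap.mem_ker.mp (htop Submodule.mem_top)
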